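/- arXiv:0809.4873 — 6 statements merged into one kernel-verified Lean document; each statement's English description precedes it below -/
import Mathlib

section
/- Let M_x, M_y, M_z ∈ SL(2,C) and set X = Tr(M_y M_z), Y = Tr(M_z M_x), Z = Tr(M_x M_y), p_x = Tr M_x, p_y = Tr M_y, p_z = Tr M_z, p_∞ = Tr(M_z M_y M_x). Then Tr(M_y^{-1} M_x M_z^{-1} M_x^{-1}) = p_x p_∞ + p_y p_z − X − Y Z. -/
theorem trace_action_x
    (Mx My Mz : Matrix.SpecialLinearGroup (Fin 2) ℂ) :
    Matrix.trace ((↑(My⁻¹ * Mx * Mz⁻¹ * Mx⁻¹) : Matrix (Fin 2) (Fin 2) ℂ))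
      = Matrix.trace ((Mx : Matrix (Fin 2) (Fin 2) ℂ))
          * Matrix.trace ((↑(Mz * My * Mx) : Matrix (Fin 2) (Fin 2) ℂ))
        + Matrix.trace ((My : Matrix (Fin 2) (Fin 2) ℂ))
          * Matrix.trace ((Mz : Matrix (Fin 2) (Fin 2) ℂ))
        - Matrix.trace ((↑(My * Mz) : Matrix (Fin 2) (Fin 2) ℂ))
        - Matrix.trace ((↑(Mz * Mx) : Matrix (Fin 2) (Fin 2) ℂ))
          * Matrix.trace ((↑(Mx * My) : Matrix (Fin 2) (Fin 2) ℂ)) := by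
  have hx := Mx.2
  have hy := My.2
  have hz := Mz.2
  simp only [Matrix.det_fin_two] at hx hy hz
  simp only [Matrix.SpecialLinearGroup.coe_mul, Matrix.SpecialLinearGroup.coe_inv,
    Matrix.adjugate_fin_two, Matrix.trace_fin_two, Matrix.mul_apply, Fin.sum_univ_two,
    Matrix.of_apply, Matrix.cons_val', Matrix.cons_val_zero, Matrix.cons_val_one,
    Matrix.head_cons, Matrix.head_fin_const, Matrix.empty_val', Matrix.cons_val_fin_one]
  ring_nf
  linear_combination ((My : Matrix (Fin 2) (Fin 2) ℂ) 1 1 * (Mz : Matrix (Fin 2) (Fin 2) ℂ) 0 0 + (My : Matrix (Fin 2) (Fin 2) ℂ) 0 0 * (Mz : Matrix (Fin 2) (Fin 2) ℂ) 1 1 - (My : Matrix (Fin 2) (Fin 2) ℂ) 0 1 * (Mz : Matrix (Fin 2) (Fin 2) ℂ) 1 0 - (My : Matrix (Fin 2) (Fin 2) ℂ) 1 0 * (Mz : Matrix (Fin 2) (Fin 2) ℂ) 0 1) * hx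
end

section
/- Let M_x, M_y, M_z ∈ SL(2,C) with invariants p_x = Tr M_x, p_y = Tr M_y, p_z = Tr M_z, p_∞ = Tr(M_z M_y M_x), X = Tr(M_y M_z), Y = Tr(M_z M_x), Z = Tr(M_x M_y). Define ω_X = p_x p_∞ + p_y p_z, ω_Y = p_y p_∞ + p_z p_x, ω_Z = p_z p_∞ + p_x p_y, ω_4 = p_x² + p_y² + p_z² + p_∞² + p_x p_y p_z p_∞. Then the Jimbo–Fricke relation holds: X Y Z + X² + Y² + Z² − ω_X X − ω_Y Y − ω_Z Z + ω_4 = 4. -/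
theorem jimbo_fricke_relation
    (Mx My Mz : Matrix.SpecialLinearGroup (Fin 2) ℂ) :
    let px := Matrix.trace ((Mx : Matrix (Fin 2) (Fin 2) ℂ))
    let py := Matrix.trace ((My : Matrix (Fin 2) (Fin 2) ℂ))
    let pz := Matrix.trace ((Mz : Matrix (Fin 2) (Fin 2) ℂ))
    let pinf := Matrix.trace ((↑(Mz * My * Mx) : Matrix (Fin 2) (Fin 2) ℂ))
    let X := Matrix.trace ((↑(My * Mz) : Matrix (Fin 2) (Fin 2) ℂ))
    let Y := Matrix.trace ((↑(Mz * Mx) : Matrix (Fin 2) (Fin 2) ℂ))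
    let Z := Matrix.trace ((↑(Mx * My) : Matrix (Fin 2) (Fin 2) ℂ))
    let ωX := px * pinf + py * pz
    let ωY := py * pinf + pz * px
    let ωZ := pz * pinf + px * py
    let ω4 := px ^ 2 + py ^ 2 + pz ^ 2 + pinf ^ 2 + px * py * pz * pinf
    X * Y * Z + X ^ 2 + Y ^ 2 + Z ^ 2 - ωX * X - ωY * Y - ωZ * Z + ω4 = 4 := by
  simp only [Matrix.SpecialLinearGroup.coe_mul]
  obtain ⟨A, hA⟩ := Mx
  obtain ⟨B, hB⟩ := My
  obtain ⟨C, hC⟩ := Mz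
  rw [Matrix.det_fin_two] at hA hB hC
  simp only [Matrix.SpecialLinearGroup.coe_mul, Matrix.SpecialLinearGroup.coe_mk,
    Matrix.trace_fin_two, Matrix.mul_apply, Fin.sum_univ_two]
  set_option maxRecDepth 100000 in
  linear_combination ((2:ℂ) + (-1:ℂ)*(C 1 1)*(C 1 1) + (-1:ℂ)*(C 0 0)*(C 0 0) + (-1:ℂ)*(B 1 1)*(B 1 1) + (B 1 1)*(B 1 1)*(C 0 0)*(C 1 1) + (-1:ℂ)*(B 1 0)*(B 1 1)*(C 0 1)*(C 1 1) + (B 1 0)*(B 1 1)*(C 0 0)*(C 0 1) + (-1:ℂ)*(B 1 0)*(B 1 0)*(C 0 1)*(C 0 1) + (-1:ℂ)*(B 0 1)*(B 1 1)*(C 1 0)*(C 1 1) + (B 0 1)*(B 1 1)*(C 0 0)*(C 1 0) + (-1:ℂ)*(B 0 1)*(B 0 1)*(C 1 0)*(C 1 0) + (B 0 0)*(B 1 1)*(C 1 1)*(C 1 1) + (-2:ℂ)*(B 0 0)*(B 1 1)*(C 0 0)*(C 1 1) + (B 0 0)*(B 1 1)*(C 0 0)*(C 0 0) + (B 0 0)*(B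 1 0)*(C 0 1)*(C 1 1) + (-1:ℂ)*(B 0 0)*(B 1 0)*(C 0 0)*(C 0 1) + (B 0 0)*(B 0 1)*(C 1 0)*(C 1 1) + (-1:ℂ)*(B 0 0)*(B 0 1)*(C 0 0)*(C 1 0) + (-1:ℂ)*(B 0 0)*(B 0 0) + (B 0 0)*(B 0 0)*(C 0 0)*(C 1 1)) * hA + ((2:ℂ) + (-2:ℂ)*(C 0 0)*(C 1 1) + (-1:ℂ)*(A 1 1)*(A 1 1) + (A 1 1)*(A 1 1)*(C 0 0)*(C 1 1) + (-1:ℂ)*(A 1 0)*(A 1 1)*(C 0 1)*(C 1 1) + (A 1 0)*(A 1 1)*(C 0 0)*(C 0 1) + (-1:ℂ)*(A 1 0)*(A 1 0)*(C 0 1)*(C 0 1) + (-1:ℂ)*(A 0 1)*(A 1 1)*(C 1 0)*(C 1 1) + (A 0 1)*(A 1 1)*(C 0 0)*(C 1 0) + (A 0 1)*(A 1 0)*(C 1 1)*(C 1 1) + (-2:ℂ)*(A 0 1)*(A 1 0)*(C 0 0)*(C 1 1) + (A 0 1)*(A 1 0)*(C 0 0)*(C 0 0) + (-1:ℂ)*(A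 0 1)*(A 0 1)*(C 1 0)*(C 1 0) + (A 0 0)*(A 1 0)*(C 0 1)*(C 1 1) + (-1:ℂ)*(A 0 0)*(A 1 0)*(C 0 0)*(C 0 1) + (A 0 0)*(A 0 1)*(C 1 0)*(C 1 1) + (-1:ℂ)*(A 0 0)*(A 0 1)*(C 0 0)*(C 1 0) + (-1:ℂ)*(A 0 0)*(A 0 0) + (A 0 0)*(A 0 0)*(C 0 0)*(C 1 1)) * hB + ((-2:ℂ)*(B 0 1)*(B 1 0) + (A 1 1)*(A 1 1)*(B 0 1)*(B 1 0) + (-1:ℂ)*(A 1 0)*(A 1 1)*(B 0 1)*(B 1 1) + (A 1 0)*(A 1 1)*(B 0 0)*(B 0 1) + (-1:ℂ)*(A 1 0)*(A 1 0)*(B 0 1)*(B 0 1) + (-1:ℂ)*(A 0 1)*(A 1 1)*(B 1 0)*(B 1 1) + (A 0 1)*(A 1 1)*(B 0 0)*(B 1 0) + (-2:ℂ)*(A 0 1)*(A 1 0) + (A 0 1)*(A 1 0)*(B 1 1)*(B 1 1) + (-2:ℂ)*(A 0 1)*(A 1 0)*(B 0 1)*(B 1 0) + (A 0 1)*(A 1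 0)*(B 0 0)*(B 0 0) + (-1:ℂ)*(A 0 1)*(A 0 1)*(B 1 0)*(B 1 0) + (A 0 0)*(A 1 0)*(B 0 1)*(B 1 1) + (-1:ℂ)*(A 0 0)*(A 1 0)*(B 0 0)*(B 0 1) + (A 0 0)*(A 0 1)*(B 1 0)*(B 1 1) + (-1:ℂ)*(A 0 0)*(A 0 1)*(B 0 0)*(B 1 0) + (A 0 0)*(A 0 0)*(B 0 1)*(B 1 0)) * hC
end

section
/- Let ω_Y, ω_Z ∈ C, ε = ±1, and define sequences by the recursion Y_{k+1} = −Y_k − 2ε Z_k + ω_Y, Z_{k+1} = 2ε Y_k + 3 Z_k + ω_Z − 2ε ω_Y (the case X = 2ε). Then Y_k = (1−2k)α − 2εk β + (ω_Y + ε ω_Z)/8 − (ω_Y − ε ω_Z)k/2 + (ω_Y − ε ω_Z)k², Z_k = 2εk α + (1+2k)β + (ω_Z + ε ω_Y)/8 + (ω_Z − ε ω_Y)k/2 + (ω_Z − ε ω_Y)k², solves this recursion for all k and any constants α, β. -/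
theorem yz_recursion_degenerate_solution
    (ωY ωZ ε : ℂ) (hε : ε = 1 ∨ ε = -1) (α β : ℂ) :
    let Y : ℕ → ℂ := fun k =>
      (1 - 2 * (k : ℂ)) * α - 2 * ε * (k : ℂ) * β
        + (ωY + ε * ωZ) / 8 - (ωY - ε * ωZ) * (k : ℂ) / 2 + (ωY - ε * ωZ) * (k : ℂ) ^ 2
    let Z : ℕ → ℂ := fun k =>
      2 * ε * (k : ℂ) * α + (1 + 2 * (k : ℂ)) * β
        + (ωZ + ε * ωY) / 8 + (ωZ - ε * ωY) * (k : ℂ) / 2 + (ωZ - ε * ωY) * (k : ℂ) ^ 2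
    ∀ k : ℕ, Y (k + 1) = -Y k - 2 * ε * Z k + ωY ∧
      Z (k + 1) = 2 * ε * Y k + 3 * Z k + ωZ - 2 * ε * ωY := by
  intro Y Z k
  rcases hε with h | h <;> subst h <;>
    exact ⟨by simp only [Y, Z]; push_cast; ring, by simp only [Y, Z]; push_cast; ring⟩
end

section
/- Let ω_Y, ω_Z ∈ C, ε = ±1, and suppose sequences (Y_k), (Z_k) satisfy the recursion Y_{k+1} = −Y_k − 2ε Z_k + ω_Y, Z_{k+1} = 2ε Y_k + 3 Z_k + ω_Z − 2ε ω_Y, and are periodic with some period N ≥ 1. Then ω_Y = ε ω_Z and the sequences are constant: Y_k = Y_0 and Z_k = Z_0 for all k. -/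
theorem yz_recursion_degenerate_periodic_implies_constant
    (ωY ωZ ε : ℂ) (hε : ε = 1 ∨ ε = -1) (Y Z : ℕ → ℂ)
    (hrec : ∀ k : ℕ, Y (k + 1) = -Y k - 2 * ε * Z k + ωY ∧
      Z (k + 1) = 2 * ε * Y k + 3 * Z k + ωZ - 2 * ε * ωY)
    (N : ℕ) (hN : 1 ≤ N)
    (hper : ∀ k : ℕ, Y (k + N) = Y k ∧ Z (k + N) = Z k) :
    ωY = ε * ωZ ∧ ∀ k : ℕ, Y k = Y 0 ∧ Z k = Z 0 := by
  have hε2 : ε * ε = 1 := by rcases hε with h | h <;> rw [h] <;> ring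
  have hNne : (N : ℂ) ≠ 0 := Nat.cast_ne_zero.mpr (by omega)
  have hW : ∀ k : ℕ, ε * Y k + Z k = ε * Y 0 + Z 0 + k * (ωZ - ε * ωY) := by
    intro k
    induction k with
    | zero => simp
    | succ k ih =>
      have h1 := (hrec k).1
      have h2 := (hrec k).2
      push_cast
      linear_combination ε * h1 + h2 + ih - 2 * Z k * hε2
  have hd : ωZ - ε * ωY = 0 := by
    have h0 := hW N
    have hp : ε * Y (0 + N) + Z (0 + N) = ε * Y 0 + Z 0 := by
      rw [(hper 0).1, (hper 0).2]
    rw [zero_add] at hp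
    rw [hp] at h0
    rcases mul_eq_zero.mp (by linear_combination -h0 : (N : ℂ) * (ωZ - ε * ωY) = 0) with h | h
    · exact absurd h hNne
    · exact h
  have hωY : ωY = ε * ωZ := by
    have h : ωZ = ε * ωY := by linear_combination hd
    rw [h]; linear_combination (-ωY) * hε2
  refine ⟨hωY, ?_⟩
  have hWc : ∀ k : ℕ, ε * Y k + Z k = ε * Y 0 + Z 0 := by
    intro k; rw [hW k, hd]; ring
  have hY : ∀ k : ℕ, Y k = Y 0 + k * (ωY - 2 * ε * (ε * Y 0 + Z 0)) := by
    intro k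
    induction k with
    | zero => simp
    | succ k ih =>
      have h1 := (hrec k).1
      have hz : Z k = ε * Y 0 + Z 0 - ε * Y k := by linear_combination hWc k
      push_cast
      linear_combination h1 - 2 * ε * hz + ih + 2 * Y k * hε2
  have he : ωY - 2 * ε * (ε * Y 0 + Z 0) = 0 := by
    have h0 := hY N
    have hp : Y N = Y 0 := by have := (hper 0).1; rwa [zero_add] at this
    rw [hp] at h0
    rcases mul_eq_zero.mp
        (by linear_combination -h0 : (N : ℂ) * (ωY - 2 * ε * (ε * Y 0 + Z 0)) = 0) with h | h
    · exact absurd h hNne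
    · exact h
  intro k
  have hYk : Y k = Y 0 := by rw [hY k, he]; ring
  have hZk : Z k = Z 0 := by
    have h := hWc k
    rw [hYk] at h
    linear_combination h
  exact ⟨hYk, hZk⟩
end

section
/- Suppose M^a, M^b, M^c ∈ SL(2,C) are all upper triangular (M_{21} = 0 for each). Then with p_x = Tr M^a, X = Tr(M^b M^c), etc., the relations ω_X = 2X + YZ, ω_Y = 2Y + XZ, ω_Z = 2Z + XY hold, where X = Tr(M^b M^c), Y = Tr(M^c M^a), Z = Tr(M^a M^b), ω_X = Tr(M^a)·Tr(M^c M^b M^a) + Tr(M^b)·Tr(M^c), ω_Y = Tr(M^b)·Tr(M^c M^b M^a) + Tr(M^c)·Tr(M^a), ω_Z = Tr(M^c)·Tr(M^c M^b M^a) + Tr(M^a)·Tr(M^b). -/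
theorem upper_triangular_orbit_I_relations
    (Ma Mb Mc : Matrix.SpecialLinearGroup (Fin 2) ℂ)
    (ha : (Ma : Matrix (Fin 2) (Fin 2) ℂ) 1 0 = 0)
    (hb : (Mb : Matrix (Fin 2) (Fin 2) ℂ) 1 0 = 0)
    (hc : (Mc : Matrix (Fin 2) (Fin 2) ℂ) 1 0 = 0) :
    let X := Matrix.trace ((↑(Mb * Mc) : Matrix (Fin 2) (Fin 2) ℂ))
    let Y := Matrix.trace ((↑(Mc * Ma) : Matrix (Fin 2) (Fin 2) ℂ))
    let Z := Matrix.trace ((↑(Ma * Mb) : Matrix (Fin 2) (Fin 2) ℂ))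
    let pinf := Matrix.trace ((↑(Mc * Mb * Ma) : Matrix (Fin 2) (Fin 2) ℂ))
    let ωX := Matrix.trace ((Ma : Matrix (Fin 2) (Fin 2) ℂ)) * pinf
      + Matrix.trace ((Mb : Matrix (Fin 2) (Fin 2) ℂ))
        * Matrix.trace ((Mc : Matrix (Fin 2) (Fin 2) ℂ))
    let ωY := Matrix.trace ((Mb : Matrix (Fin 2) (Fin 2) ℂ)) * pinf
      + Matrix.trace ((Mc : Matrix (Fin 2) (Fin 2) ℂ))
        * Matrix.trace ((Ma : Matrix (Fin 2) (Fin 2) ℂ))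
    let ωZ := Matrix.trace ((Mc : Matrix (Fin 2) (Fin 2) ℂ)) * pinf
      + Matrix.trace ((Ma : Matrix (Fin 2) (Fin 2) ℂ))
        * Matrix.trace ((Mb : Matrix (Fin 2) (Fin 2) ℂ))
    ωX = 2 * X + Y * Z ∧ ωY = 2 * Y + X * Z ∧ ωZ = 2 * Z + X * Y := by
  have hA : (Ma : Matrix (Fin 2) (Fin 2) ℂ) 0 0 * (Ma : Matrix (Fin 2) (Fin 2) ℂ) 1 1 = 1 := by
    have := Ma.2
    rw [Matrix.det_fin_two, ha] at this
    linear_combination this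
  have hB : (Mb : Matrix (Fin 2) (Fin 2) ℂ) 0 0 * (Mb : Matrix (Fin 2) (Fin 2) ℂ) 1 1 = 1 := by
    have := Mb.2
    rw [Matrix.det_fin_two, hb] at this
    linear_combination this
  have hC : (Mc : Matrix (Fin 2) (Fin 2) ℂ) 0 0 * (Mc : Matrix (Fin 2) (Fin 2) ℂ) 1 1 = 1 := by
    have := Mc.2
    rw [Matrix.det_fin_two, hc] at this
    linear_combination this
  simp only [Matrix.SpecialLinearGroup.coe_mul, Matrix.trace_fin_two, Matrix.mul_apply,
    Fin.sum_univ_two, ha, hb, hc, mul_zero, zero_mul, add_zero, zero_add]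
  set a0 := (Ma : Matrix (Fin 2) (Fin 2) ℂ) 0 0
  set a1 := (Ma : Matrix (Fin 2) (Fin 2) ℂ) 1 1
  set b0 := (Mb : Matrix (Fin 2) (Fin 2) ℂ) 0 0
  set b1 := (Mb : Matrix (Fin 2) (Fin 2) ℂ) 1 1
  set c0 := (Mc : Matrix (Fin 2) (Fin 2) ℂ) 0 0
  set c1 := (Mc : Matrix (Fin 2) (Fin 2) ℂ) 1 1
  refine ⟨?_, ?_, ?_⟩
  · linear_combination (b1 * c1 + b0 * c0 - b1 * c0 - b0 * c1) * hA
  · linear_combination (a1 * c1 + a0 * c0 - a1 * c0 - a0 * c1) * hB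
  · linear_combination (a1 * b1 + a0 * b0 - a1 * b0 - a0 * b1) * hC
end

section
/- Let M_x, M_y, M_z ∈ SL(2,C) satisfy Tr M_x = Tr M_y = Tr(M_x M_y) = 2 and Tr M_z = Tr(M_x M_z) = Tr(M_y M_z) = 2. Then M_x, M_y, M_z have a common eigenvector. -/
/-- Key lemma: if `A = [[a1,b1],[c1,-a1]]` is a nonzero nilpotent matrix, `B` similarly
nilpotent-shaped, `tr(AB) = 0`, and `v` is in the kernel of `A`, then `v` is in the kernel
of `B`. -/
lemma parab_key (a1 b1 c1 a2 b2 c2 v1 v2 : ℂ)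
    (hA : a1^2 + b1*c1 = 0) (hB : a2^2 + b2*c2 = 0)
    (ht : 2*a1*a2 + b1*c2 + c1*b2 = 0)
    (hne : ¬(a1 = 0 ∧ b1 = 0 ∧ c1 = 0))
    (h1 : a1*v1 + b1*v2 = 0) (h2 : c1*v1 - a1*v2 = 0) :
    a2*v1 + b2*v2 = 0 ∧ c2*v1 - a2*v2 = 0 := by
  by_cases hc1 : c1 = 0
  · -- then a1 = 0 and b1 ≠ 0
    have ha1 : a1 = 0 := by
      have h : a1^2 = 0 := by linear_combination hA - b1*hc1
      exact pow_eq_zero_iff (n := 2) (by norm_num) |>.mp h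
    have hb1 : b1 ≠ 0 := by
      intro hb1
      exact hne ⟨ha1, hb1, hc1⟩
    have hv2 : v2 = 0 := by
      have h : b1 * v2 = 0 := by linear_combination h1 - v1*ha1
      exact (mul_eq_zero.mp h).resolve_left hb1
    have hc2 : c2 = 0 := by
      have h : b1 * c2 = 0 := by linear_combination ht - 2*a2*ha1 - b2*hc1
      exact (mul_eq_zero.mp h).resolve_left hb1
    have ha2 : a2 = 0 := by
      have h : a2^2 = 0 := by linear_combination hB - b2*hc2
      exact pow_eq_zero_iff (n := 2) (by norm_num) |>.mp h
    constructor <;> simp [ha2, hc2, hv2]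
  · by_cases hc2 : c2 = 0
    · have ha2 : a2 = 0 := by
        have h : a2^2 = 0 := by linear_combination hB - b2 * hc2
        exact pow_eq_zero_iff (n := 2) (by norm_num) |>.mp h
      have hb2 : b2 = 0 := by
        have h : c1 * b2 = 0 := by linear_combination ht - 2*a1*ha2 - b1*hc2
        exact (mul_eq_zero.mp h).resolve_left hc1
      constructor <;> simp [ha2, hb2, hc2]
    · have E : a1*c2 - a2*c1 = 0 := by
        have h : (a1*c2 - a2*c1)^2 = 0 := by
          linear_combination c2^2*hA + c1^2*hB - c1*c2*ht
        exact pow_eq_zero_iff (n := 2) (by norm_num) |>.mp h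
      constructor
      · have h : (a2*v1 + b2*v2) * (c1^2*c2) = 0 := by
          linear_combination (a2*c1*c2)*h2 + (c1^2*v2)*hB + (a2*c1*v2)*E
        have := mul_eq_zero.mp h
        rcases this with h' | h'
        · exact h'
        · exact absurd h' (by simp [hc1, hc2])
      · have h : (c2*v1 - a2*v2) * c1 = 0 := by
          linear_combination c2*h2 + v2*E
        exact (mul_eq_zero.mp h).resolve_right hc1

/-- A matrix `[[a,b],[c,-a]]` with `a^2 + bc = 0` always has a nonzero kernel vector. -/
lemma parab_ker (a1 b1 c1 : ℂ) (hA : a1^2 + b1*c1 = 0) :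
    ∃ v1 v2 : ℂ, ¬(v1 = 0 ∧ v2 = 0) ∧ a1*v1 + b1*v2 = 0 ∧ c1*v1 - a1*v2 = 0 := by
  by_cases hc1 : c1 = 0
  · have ha1 : a1 = 0 := by
      have h : a1^2 = 0 := by linear_combination hA - b1*hc1
      exact pow_eq_zero_iff (n := 2) (by norm_num) |>.mp h
    exact ⟨1, 0, by simp, by simp [ha1], by simp [ha1, hc1]⟩
  · exact ⟨a1, c1, fun h => hc1 h.2, by linear_combination hA, by ring⟩

/-- Entries-level version of the main theorem. -/
lemma parab_triple (a1 b1 c1 a2 b2 c2 a3 b3 c3 : ℂ)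
    (hA : a1^2 + b1*c1 = 0) (hB : a2^2 + b2*c2 = 0) (hC : a3^2 + b3*c3 = 0)
    (h12 : 2*a1*a2 + b1*c2 + c1*b2 = 0)
    (h13 : 2*a1*a3 + b1*c3 + c1*b3 = 0)
    (h23 : 2*a2*a3 + b2*c3 + c2*b3 = 0) :
    ∃ v1 v2 : ℂ, ¬(v1 = 0 ∧ v2 = 0) ∧
      (a1*v1 + b1*v2 = 0 ∧ c1*v1 - a1*v2 = 0) ∧
      (a2*v1 + b2*v2 = 0 ∧ c2*v1 - a2*v2 = 0) ∧
      (a3*v1 + b3*v2 = 0 ∧ c3*v1 - a3*v2 = 0) := by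
  by_cases h1 : a1 = 0 ∧ b1 = 0 ∧ c1 = 0
  · obtain ⟨ha1, hb1, hc1⟩ := h1
    by_cases h2 : a2 = 0 ∧ b2 = 0 ∧ c2 = 0
    · obtain ⟨ha2, hb2, hc2⟩ := h2
      obtain ⟨v1, v2, hv, k1, k2⟩ := parab_ker a3 b3 c3 hC
      exact ⟨v1, v2, hv, ⟨by simp [ha1, hb1], by simp [ha1, hc1]⟩,
        ⟨by simp [ha2, hb2], by simp [ha2, hc2]⟩, k1, k2⟩
    · obtain ⟨v1, v2, hv, k1, k2⟩ := parab_ker a2 b2 c2 hB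
      obtain ⟨k3, k4⟩ := parab_key a2 b2 c2 a3 b3 c3 v1 v2 hB hC h23 h2 k1 k2
      exact ⟨v1, v2, hv, ⟨by simp [ha1, hb1], by simp [ha1, hc1]⟩, ⟨k1, k2⟩, k3, k4⟩
  · obtain ⟨v1, v2, hv, k1, k2⟩ := parab_ker a1 b1 c1 hA
    obtain ⟨k3, k4⟩ := parab_key a1 b1 c1 a2 b2 c2 v1 v2 hA hB h12 h1 k1 k2
    obtain ⟨k5, k6⟩ := parab_key a1 b1 c1 a3 b3 c3 v1 v2 hA hC h13 h1 k1 k2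
    exact ⟨v1, v2, hv, ⟨k1, k2⟩, ⟨k3, k4⟩, k5, k6⟩

theorem common_eigenvector_of_parabolic_triple
    (Mx My Mz : Matrix.SpecialLinearGroup (Fin 2) ℂ)
    (hx : Matrix.trace ((Mx : Matrix (Fin 2) (Fin 2) ℂ)) = 2)
    (hy : Matrix.trace ((My : Matrix (Fin 2) (Fin 2) ℂ)) = 2)
    (hz : Matrix.trace ((Mz : Matrix (Fin 2) (Fin 2) ℂ)) = 2)
    (hxy : Matrix.trace ((↑(Mx * My) : Matrix (Fin 2) (Fin 2) ℂ)) = 2)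
    (hxz : Matrix.trace ((↑(Mx * Mz) : Matrix (Fin 2) (Fin 2) ℂ)) = 2)
    (hyz : Matrix.trace ((↑(My * Mz) : Matrix (Fin 2) (Fin 2) ℂ)) = 2) :
    ∃ v : Fin 2 → ℂ, v ≠ 0 ∧ ∃ a b c : ℂ,
      (Mx : Matrix (Fin 2) (Fin 2) ℂ).mulVec v = a • v ∧
      (My : Matrix (Fin 2) (Fin 2) ℂ).mulVec v = b • v ∧
      (Mz : Matrix (Fin 2) (Fin 2) ℂ).mulVec v = c • v := by
  set X : Matrix (Fin 2) (Fin 2) ℂ := (Mx : Matrix (Fin 2) (Fin 2) ℂ) with hX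
  set Y : Matrix (Fin 2) (Fin 2) ℂ := (My : Matrix (Fin 2) (Fin 2) ℂ) with hY
  set Z : Matrix (Fin 2) (Fin 2) ℂ := (Mz : Matrix (Fin 2) (Fin 2) ℂ) with hZ
  have dX : X.det = 1 := Mx.prop
  have dY : Y.det = 1 := My.prop
  have dZ : Z.det = 1 := Mz.prop
  rw [Matrix.det_fin_two] at dX dY dZ
  rw [Matrix.trace_fin_two] at hx hy hz
  have cxy : (↑(Mx * My) : Matrix (Fin 2) (Fin 2) ℂ) = X * Y := rfl
  have cxz : (↑(Mx * Mz) : Matrix (Fin 2) (Fin 2) ℂ) = X * Z := rfl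
  have cyz : (↑(My * Mz) : Matrix (Fin 2) (Fin 2) ℂ) = Y * Z := rfl
  rw [cxy] at hxy; rw [cxz] at hxz; rw [cyz] at hyz
  rw [Matrix.trace_fin_two] at hxy hxz hyz
  simp only [Matrix.mul_apply, Fin.sum_univ_two] at hxy hxz hyz
  obtain ⟨v1, v2, hv, ⟨k1, k2⟩, ⟨k3, k4⟩, k5, k6⟩ :=
    parab_triple (X 0 0 - 1) (X 0 1) (X 1 0) (Y 0 0 - 1) (Y 0 1) (Y 1 0)
      (Z 0 0 - 1) (Z 0 1) (Z 1 0)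
      (by linear_combination X 0 0 * hx - dX)
      (by linear_combination Y 0 0 * hy - dY)
      (by linear_combination Z 0 0 * hz - dZ)
      (by linear_combination hxy - Y 1 1 * hx + (X 0 0 - 2) * hy)
      (by linear_combination hxz - Z 1 1 * hx + (X 0 0 - 2) * hz)
      (by linear_combination hyz - Z 1 1 * hy + (Y 0 0 - 2) * hz)
  refine ⟨![v1, v2], ?_, 1, 1, 1, ?_, ?_, ?_⟩
  · intro h
    apply hv
    constructor
    · have := congrFun h 0; simpa using this
    · have := congrFun h 1; simpa using this
  · funext i
    fin_cases i <;> simp [Matrix.mulVec, dotProduct, Fin.sum_univ_two]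
    · linear_combination k1
    · linear_combination k2 + v2 * hx
  · funext i
    fin_cases i <;> simp [Matrix.mulVec, dotProduct, Fin.sum_univ_two]
    · linear_combination k3
    · linear_combination k4 + v2 * hy
  · funext i
    fin_cases i <;> simp [Matrix.mulVec, dotProduct, Fin.sum_univ_two]
    · linear_combination k5
    · linear_combination k6 + v2 * hz
end
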